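/- Let x̄ ∈ K ∩ ℤⁿ and g ∈ ℝⁿ. The infimum of g·x over the set X = {x ∈ K ∩ ℤⁿ : x ⪰ x̄} is finite if and only if g_i ≥ 0 for all i; moreover, when g ≥ 0 the infimum is attained at some point of X. -/

import Mathlib

/-- Lexicographic strict order on `Fin n → ℝ` associated with the standard basis. -/
def lexLt {n : ℕ} (x y : Fin n → ℝ) : Prop :=
  ∃ i : Fin n, x i < y i ∧ ∀ j : Fin n, j < i → x j = y j

/-- `x ⪯ y` iff `x ≺ y` or `x = y`. -/
def lexLe {n : ℕ} (x y : Fin n → ℝ) : Prop := lexLt x y ∨ x = y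

/-- Membership in the cone `K = ℝⁿ₊`. -/
def inK {n : ℕ} (x : Fin n → ℝ) : Prop := ∀ i, 0 ≤ x i

/-- `x` is an integer point. -/
def isInt {n : ℕ} (x : Fin n → ℝ) : Prop := ∀ i, ∃ z : ℤ, x i = (z : ℝ)

/-- For `x̄ ∈ K ∩ ℤⁿ` and `g ∈ ℝⁿ`, the infimum of `g·x` over
`X = {x ∈ K ∩ ℤⁿ : x ⪰ x̄}` is finite (i.e. the set of values is bounded below,
`X` being nonempty) iff `g ≥ 0`; and when `g ≥ 0` the infimum is attained on `X`. -/
theorem stmt1 {n : ℕ} (xb : Fin n → ℝ) (hK : inK xb) (hI : isInt xb) (g : Fin n → ℝ) :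
    (BddBelow {t : ℝ | ∃ x : Fin n → ℝ,
        (inK x ∧ isInt x ∧ lexLe xb x) ∧ ∑ i, g i * x i = t} ↔ ∀ i, 0 ≤ g i) ∧
    ((∀ i, 0 ≤ g i) → ∃ x : Fin n → ℝ, (inK x ∧ isInt x ∧ lexLe xb x) ∧
      ∀ y : Fin n → ℝ, (inK y ∧ isInt y ∧ lexLe xb y) →
        ∑ i, g i * x i ≤ ∑ i, g i * y i) := by
  -- candidate points
  set cand : Fin n → (Fin n → ℝ) :=
    fun k j => if j < k then xb j else if j = k then xb k + 1 else 0 with hcand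
  have hcandX : ∀ k, inK (cand k) ∧ isInt (cand k) ∧ lexLe xb (cand k) := by
    intro k
    refine ⟨?_, ?_, ?_⟩
    · intro j
      by_cases h1 : j < k
      · simp [hcand, h1]; exact hK j
      · by_cases h2 : j = k
        · simp [hcand, h1, h2]; linarith [hK k]
        · simp [hcand, h1, h2]
    · intro j
      by_cases h1 : j < k
      · obtain ⟨z, hz⟩ := hI j
        exact ⟨z, by simp [hcand, h1, hz]⟩
      · by_cases h2 : j = k
        · obtain ⟨z, hz⟩ := hI k
          exact ⟨z + 1, by simp [hcand, h1, h2, hz]⟩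
        · exact ⟨0, by simp [hcand, h1, h2]⟩
    · left
      refine ⟨k, ?_, ?_⟩
      · simp [hcand]
      · intro j hj
        simp [hcand, hj]
  -- comparison lemma: any y ≻ xb with first difference at k dominates cand k
  have hdom : ∀ (hg : ∀ i, 0 ≤ g i) (y : Fin n → ℝ), inK y → isInt y →
      ∀ k : Fin n, xb k < y k → (∀ j, j < k → xb j = y j) →
      ∑ j, g j * cand k j ≤ ∑ j, g j * y j := by
    intro hg y hyK hyI k hk hkj
    apply Finset.sum_le_sum
    intro j _
    rcases lt_trichotomy j k with h | h | h
    · rw [show cand k j = xb j by simp [hcand, h], hkj j h]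
    · subst h
      have hjk : ¬ j < j := lt_irrefl j
      rw [show cand j j = xb j + 1 by simp [hcand]]
      obtain ⟨z, hz⟩ := hI j
      obtain ⟨w, hw⟩ := hyI j
      have hzw : z < w := by rw [hz, hw] at hk; exact_mod_cast hk
      have : xb j + 1 ≤ y j := by
        rw [hz, hw]
        have : z + 1 ≤ w := hzw
        exact_mod_cast this
      exact mul_le_mul_of_nonneg_left this (hg j)
    · rw [show cand k j = 0 by simp [hcand, h.not_gt, h.ne']]
      simpa using mul_nonneg (hg j) (hyK j)
  constructor
  · constructor
    · -- BddBelow → g ≥ 0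
      rintro ⟨c, hc⟩ i
      by_contra hgi
      push_neg at hgi
      set base := ∑ j, g j * xb j with hbase
      obtain ⟨m, hm⟩ := exists_nat_gt (max ((c - base) / g i) 0)
      have hm0 : (0:ℝ) < m := lt_of_le_of_lt (le_max_right _ _) hm
      have hmd : (c - base) / g i < m := lt_of_le_of_lt (le_max_left _ _) hm
      set x : Fin n → ℝ := Function.update xb i (xb i + m) with hx
      have hval : ∑ j, g j * x j = base + g i * m := by
        have hco : ∀ j ∈ Finset.univ,
            g j * x j = g j * xb j + (if j = i then g i * (m:ℝ) else 0) := by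
          intro j _
          by_cases h : j = i
          · subst h; simp [hx]; ring
          · simp [hx, Function.update_of_ne h, h]
        rw [Finset.sum_congr rfl hco, Finset.sum_add_distrib,
          Finset.sum_ite_eq' Finset.univ i]
        simp [hbase]
      have hmem : (∑ j, g j * x j) ∈ {t : ℝ | ∃ x : Fin n → ℝ,
          (inK x ∧ isInt x ∧ lexLe xb x) ∧ ∑ i, g i * x i = t} := by
        refine ⟨x, ⟨?_, ?_, ?_⟩, rfl⟩
        · intro j
          by_cases h : j = i
          · subst h; simp [hx]; linarith [hK j]
          · simp [hx, Function.update_of_ne h]; exact hK j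
        · intro j
          by_cases h : j = i
          · subst h
            obtain ⟨z, hz⟩ := hI j
            exact ⟨z + m, by simp [hx, hz]⟩
          · obtain ⟨z, hz⟩ := hI j
            exact ⟨z, by simp [hx, Function.update_of_ne h, hz]⟩
        · left
          refine ⟨i, by rw [hx, Function.update_self]; linarith, ?_⟩
          intro j hj
          rw [hx, Function.update_of_ne (ne_of_lt hj)]
      have hcle := hc hmem
      rw [hval] at hcle
      have : (m:ℝ) * g i < c - base := (div_lt_iff_of_neg hgi).mp hmd
      nlinarith
    · -- g ≥ 0 → BddBelow (by 0)
      intro hg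
      refine ⟨0, ?_⟩
      rintro t ⟨x, ⟨hxK, _, _⟩, rfl⟩
      exact Finset.sum_nonneg fun j _ => mul_nonneg (hg j) (hxK j)
  · -- attainment
    intro hg
    set f : Option (Fin n) → (Fin n → ℝ) := fun o => o.elim xb cand with hf
    have hfX : ∀ o, inK (f o) ∧ isInt (f o) ∧ lexLe xb (f o) := by
      intro o
      cases o with
      | none => exact ⟨hK, hI, Or.inr rfl⟩
      | some k => exact hcandX k
    obtain ⟨o, -, ho⟩ := Finset.exists_min_image (Finset.univ : Finset (Option (Fin n)))
      (fun o => ∑ j, g j * f o j) ⟨none, Finset.mem_univ _⟩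
    refine ⟨f o, hfX o, ?_⟩
    rintro y ⟨hyK, hyI, hyle⟩
    rcases hyle with ⟨k, hk, hkj⟩ | heq
    · calc ∑ j, g j * f o j ≤ ∑ j, g j * f (some k) j := ho _ (Finset.mem_univ _)
        _ = ∑ j, g j * cand k j := rfl
        _ ≤ ∑ j, g j * y j := hdom hg y hyK hyI k hk hkj
    · calc ∑ j, g j * f o j ≤ ∑ j, g j * f none j := ho _ (Finset.mem_univ _)
        _ = ∑ j, g j * xb j := rfl
        _ = ∑ j, g j * y j := by rw [heq]
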